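/- For each n∈ℕ, the coded subshift X_n of the full two-shift generated by the two words of length 2^n, W_n={0^{2^n−1}1, 1^{2^n−1}0}, has topological entropy h_top(X_n,T)=2^{-n}. -/

import Mathlib

open MeasureTheory Real Filter Topology

noncomputable section

namespace PhaseTransitions

/-! ### Measure-theoretic entropy and topological pressure -/

/-- Base-2 entropy of the (finite, measurable) partition of `X` induced by an
observable `f : X → F` with finitely many values. -/
def entOfObs {X F : Type*} [MeasurableSpace X] [Fintype F]
    (μ : Measure X) (f : X → F) : ℝ :=
  ∑ a : F, -((μ (f ⁻¹' {a})).toReal * Real.logb 2 (μ (f ⁻¹' {a})).toReal)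

/-- Entropy of the transformation `T` with respect to the partition induced by
the observable `f` : the limit (= infimum) of `(1/n) H(⋁_{i<n} T⁻ⁱ f)`. -/
def entObsT {X F : Type*} [MeasurableSpace X] [Fintype F]
    (T : X → X) (μ : Measure X) (f : X → F) : ℝ :=
  ⨅ n : ℕ, entOfObs μ (fun x => fun i : Fin (n + 1) => f (T^[(i : ℕ)] x)) / (n + 1)

/-- Kolmogorov–Sinai (measure-theoretic) entropy, base 2: supremum over all
finite measurable partitions (encoded by observables with values in `Fin k`). -/
def kolSinai {X : Type*} [MeasurableSpace X] (T : X → X) (μ : Measure X) : ℝ :=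
  ⨆ k : ℕ, ⨆ f : {f : X → Fin k // Measurable f}, entObsT T μ f.1

/-- `μ` is a `T`-invariant Borel probability measure. -/
def InvProb {X : Type*} [MeasurableSpace X] (T : X → X) (μ : Measure X) : Prop :=
  IsProbabilityMeasure μ ∧ MeasurePreserving T μ μ

/-- Topological pressure, via the variational principle. -/
def pressure {X : Type*} [MeasurableSpace X] (T : X → X) (φ : X → ℝ) : ℝ :=
  ⨆ μ : {μ : Measure X // InvProb T μ}, (kolSinai T μ.1 + ∫ x, φ x ∂μ.1)

/-- An equilibrium state of the potential `φ`: an invariant probability measure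
attaining the supremum in the variational principle. -/
def IsEquilibrium {X : Type*} [MeasurableSpace X] (T : X → X) (φ : X → ℝ)
    (μ : Measure X) : Prop :=
  InvProb T μ ∧ kolSinai T μ + ∫ x, φ x ∂μ = pressure T φ

/-! ### The two-sided full shift on two symbols -/

/-- The two-sided full shift space `{0,1}^ℤ`. -/
abbrev Bin : Type := ℤ → Bool

/-- The (left) shift map. -/
def shift (x : Bin) : Bin := fun n => x (n + 1)

/-- `x` is a bi-infinite free concatenation of words from `W`: there is a
bi-infinite increasing sequence of cut points, cofinal in both directions, such
that consecutive cut points delimit words of `W`. -/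
def IsFreeConcat (W : Set (List Bool)) (x : Bin) : Prop :=
  ∃ t : ℤ → ℤ, StrictMono t ∧ (∀ N : ℤ, ∃ k, N < t k) ∧ (∀ N : ℤ, ∃ k, t k < N) ∧
    ∀ k : ℤ, ∃ w ∈ W, t (k + 1) = t k + w.length ∧
      ∀ (i : ℕ) (h : i < w.length), x (t k + (i : ℤ)) = w.get ⟨i, h⟩

/-- The coded system generated by the word set `W`: the closure of the set of
free concatenations of words from `W`. -/
def codedSystem (W : Set (List Bool)) : Set Bin :=
  closure {x | IsFreeConcat W x}

/-- The generating set `W_n = {0^{2^n-1}1, 1^{2^n-1}0}`. -/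
def genWords (n : ℕ) : Set (List Bool) :=
  {List.replicate (2 ^ n - 1) false ++ [true], List.replicate (2 ^ n - 1) true ++ [false]}

/-- The subshift `X_n`, the coded system generated by `W_n`. -/
def Xsub (n : ℕ) : Set Bin := codedSystem (genWords n)

/-- The set of words of length `j` in the language of `Y ⊆ {0,1}^ℤ`. -/
def langWord (Y : Set Bin) (j : ℕ) : Set (Fin j → Bool) :=
  {w | ∃ x ∈ Y, ∀ i : Fin j, x ((i : ℕ) : ℤ) = w i}

/-! ### The metric and the potential -/

open Classical in
/-- The metric `d(x,y) = 2^{-inf{|n| : x_n ≠ y_n}}` on the shift space. -/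
def binDist (x y : Bin) : ℝ :=
  if x = y then 0
  else (1 / 2 : ℝ) ^ sInf {m : ℕ | ∃ i : ℤ, i.natAbs = m ∧ x i ≠ y i}

/-- Distance from a point to a set. -/
def distToSet (x : Bin) (S : Set Bin) : ℝ :=
  sInf ((fun y => binDist x y) '' S)

/-- `δ_j = (10 + 3 log₂ j)/(α j)`. -/
def deltaSeq (α : ℝ) (j : ℕ) : ℝ := (10 + 3 * Real.logb 2 j) / (α * j)

/-- The drop `δ` as a function of the distance `r`: if `r = 2^{-j}` this equals
`δ_j = (10 + 3 log₂ j)/(α j)`, and `δ = 0` when `r = 0` (i.e. `δ_∞ = 0`). -/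
def deltaOf (α : ℝ) (r : ℝ) : ℝ :=
  if r = 0 then 0
  else (10 + 3 * Real.logb 2 (-Real.logb 2 r)) / (α * (-Real.logb 2 r))

/-- `c_n = -∑_{j=n}^∞ 1/(2^{j+1} β_j)`. -/
def cseq (β : ℕ → ℝ) (n : ℕ) : ℝ :=
  -∑' k : ℕ, 1 / (2 ^ (n + k + 1) * β (n + k))

/-- `φ_n(x) = c_n − δ_j` when `dist(x, X_n) = 2^{-j}` (and `φ_n = c_n` on `X_n`). -/
def phiN (α : ℝ) (c : ℕ → ℝ) (n : ℕ) (x : Bin) : ℝ :=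
  c n - deltaOf α (distToSet x (Xsub n))

/-- The potential `φ = sup_{n ≥ 1} φ_n`. -/
def phi (α : ℝ) (c : ℕ → ℝ) (x : Bin) : ℝ :=
  ⨆ n : ℕ, phiN α c (n + 1) x

/-- The constants of the finite (truncated) construction:
`c_{n} = c_1 + ∑_{j=1}^{n-1} 1/(2^{j+1} β_j)`. -/
def cseqFin (c1 : ℝ) (β : ℕ → ℝ) (n : ℕ) : ℝ :=
  c1 + ∑ j ∈ Finset.Ico 1 n, 1 / (2 ^ (j + 1) * β j)

/-- The truncated potential `φ = max{φ_n : 1 ≤ n ≤ N+1}`. -/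
def phiFin (α : ℝ) (c : ℕ → ℝ) (N : ℕ) (x : Bin) : ℝ :=
  ⨆ n : Fin (N + 1), phiN α c ((n : ℕ) + 1) x

/-! ### Measures of maximal entropy and relative pressure -/

/-- `μ` is a measure of maximal entropy for the subsystem `Y` (a `T`-invariant
probability measure giving full mass to `Y` and maximizing entropy among such). -/
def IsMaxEntropyOn (Y : Set Bin) (μ : Measure Bin) : Prop :=
  InvProb shift μ ∧ μ Y = 1 ∧
    ∀ ν : Measure Bin, InvProb shift ν → ν Y = 1 → kolSinai shift ν ≤ kolSinai shift μ

/-- The topological pressure of the subsystem `Y` (computed via the variational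
principle over invariant measures giving full mass to `Y`). -/
def pressureOn (Y : Set Bin) (φ : Bin → ℝ) : ℝ :=
  ⨆ μ : {μ : Measure Bin // InvProb shift μ ∧ μ Y = 1},
    (kolSinai shift μ.1 + ∫ x, φ x ∂μ.1)

/-! ### The pin-sequence space -/

/-- `Y`, the closure of the union of the `X_n`, `n ≥ 1`. -/
def Yset : Set Bin := closure (⋃ n : ℕ, Xsub (n + 1))

/-- The word `x_i ⋯ x_j` belongs to the language of `Y`. -/
def SegIn (x : Bin) (i j : ℤ) (Y : Set Bin) : Prop :=
  ∃ y ∈ Y, ∀ m : ℤ, i ≤ m → m ≤ j → y (m - i) = x m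

/-- The word `x_0 ⋯ x_{j-1}` belongs to the language of `Y`. -/
def WordIn (x : Bin) (j : ℕ) (Y : Set Bin) : Prop :=
  ∃ y ∈ Y, ∀ m : ℕ, m < j → y (m : ℤ) = x (m : ℤ)

/-- The pin-sequence space `P ⊆ X × {0,1}^ℤ`: pinless stretches of `x` lie in the
language of `Y`, and stretches between two pins do not. -/
def PinSpace : Set (Bin × Bin) :=
  {p | (∀ i j : ℤ, i < j → (∀ k : ℤ, i < k → k ≤ j → p.2 k = false) → SegIn p.1 i j Yset) ∧
       (∀ i j : ℤ, i < j → p.2 i = true → p.2 j = true → ¬ SegIn p.1 i j Yset)}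

/-- The product shift `T̄(x,z) = (Tx, Tz)`. -/
def shift2 (p : Bin × Bin) : Bin × Bin := (shift p.1, shift p.2)

/-- The set `A = {(x,z) ∈ P : z_0 = 1}`. -/
def Aset : Set (Bin × Bin) := {p | p ∈ PinSpace ∧ p.2 0 = true}

/-- The first return time to `A`. -/
def retTime (p : Bin × Bin) : ℕ :=
  sInf {k : ℕ | 1 ≤ k ∧ shift2^[k] p ∈ Aset}

/-- The induced (first-return) map `T̄_A`. -/
def inducedMap (p : Bin × Bin) : Bin × Bin := shift2^[retTime p] p

/-- `Q_j`, the set of points of `A` with first return time `j`. -/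
def Qset (j : ℕ) : Set (Bin × Bin) := {p | p ∈ Aset ∧ retTime p = j}

/-- `Q_{j,s}` for `1 ≤ s ≤ ⌊log₂ j⌋ - 3`: points of `Q_j` whose initial block of
length `j` lies in the language of `X_s`; the class `s = 0` collects the blocks
belonging to some `X_{s'}` with `s' ≥ ⌊log₂ j⌋ - 2`. -/
def Qjs (j s : ℕ) : Set (Bin × Bin) :=
  if s = 0 then
    {p | p ∈ Qset j ∧ ∃ s' : ℕ, 1 ≤ s' ∧ Nat.log 2 j - 2 ≤ s' ∧ WordIn p.1 j (Xsub s')}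
  else {p | p ∈ Qset j ∧ WordIn p.1 j (Xsub s)}


/-! ### Auxiliary material for the entropy computation -/

/-- The word of `W_n` labelled by a bit. -/
def wd (n : ℕ) (b : Bool) : List Bool :=
  if b then List.replicate (2 ^ n - 1) true ++ [false]
  else List.replicate (2 ^ n - 1) false ++ [true]

lemma wd_mem (n : ℕ) (b : Bool) : wd n b ∈ genWords n := by
  cases b <;> simp [wd, genWords]

lemma wd_length (n : ℕ) (b : Bool) : (wd n b).length = 2 ^ n := by
  have h : 1 ≤ 2 ^ n := Nat.one_le_two_pow
  cases b <;> simp [wd] <;> omega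

lemma wd_get (n : ℕ) (b : Bool) (i : ℕ) (h : i < (wd n b).length) :
    (wd n b).get ⟨i, h⟩ = (b != decide (i = 2 ^ n - 1)) := by
  have h1 : 1 ≤ 2 ^ n := Nat.one_le_two_pow
  have h2 : i < 2 ^ n := by rwa [wd_length] at h
  rw [List.get_eq_getElem]
  have hwf : wd n false = List.replicate (2 ^ n - 1) false ++ [true] := by simp [wd]
  have hwt : wd n true = List.replicate (2 ^ n - 1) true ++ [false] := by simp [wd]
  rcases eq_or_ne i (2 ^ n - 1) with hi | hi
  · subst hi
    cases b <;> simp only [hwf, hwt, Bool.false_bne, Bool.true_bne,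
      decide_true, Bool.not_true] <;>
    · rw [List.getElem_append_right (by simp)]
      simp
  · have h3 : i < 2 ^ n - 1 := by omega
    cases b <;> simp only [hwf, hwt, hi, decide_false, Bool.false_bne,
      Bool.true_bne, Bool.not_false] <;>
    · rw [List.getElem_append_left (by simpa using h3)]
      simp

lemma genWords_spec {n : ℕ} {w : List Bool} (h : w ∈ genWords n) :
    w.length = 2 ^ n ∧ ∃ b : Bool, ∀ (i : ℕ) (hi : i < w.length),
      w.get ⟨i, hi⟩ = (b != decide (i = 2 ^ n - 1)) := by
  rcases h with h | h
  · subst h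
    exact ⟨wd_length n false, false, wd_get n false⟩
  · rw [Set.mem_singleton_iff] at h
    subst h
    exact ⟨wd_length n true, true, wd_get n true⟩

/-- The canonical free concatenation with block labels `c`. -/
def pt (n : ℕ) (c : ℤ → Bool) : Bin :=
  fun i => (c (i / (2 ^ n : ℤ)) != decide ((i % (2 ^ n : ℤ)).toNat = 2 ^ n - 1))

lemma pt_block (n : ℕ) (c : ℤ → Bool) (k : ℤ) (i : ℕ) (hi : i < 2 ^ n) :
    pt n c (k * 2 ^ n + (i : ℤ)) = (c k != decide (i = 2 ^ n - 1)) := by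
  have hL : (0 : ℤ) < 2 ^ n := by positivity
  have hdiv : (k * 2 ^ n + (i : ℤ)) / 2 ^ n = k := by
    rw [add_comm, Int.add_mul_ediv_right _ _ (ne_of_gt hL),
      Int.ediv_eq_zero_of_lt (by positivity) (by exact_mod_cast hi)]
    ring
  have hmod : (k * 2 ^ n + (i : ℤ)) % 2 ^ n = (i : ℤ) := by
    rw [add_comm, Int.add_mul_emod_self_right,
      Int.emod_eq_of_lt (by positivity) (by exact_mod_cast hi)]
  simp only [pt, hdiv, hmod, Int.toNat_natCast]

lemma pt_mem (n : ℕ) (c : ℤ → Bool) : pt n c ∈ Xsub n := by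
  apply subset_closure
  have hL : (0 : ℤ) < 2 ^ n := by positivity
  have hL1 : (1 : ℤ) ≤ 2 ^ n := hL
  refine ⟨fun k => k * 2 ^ n, ?_, ?_, ?_, ?_⟩
  · intro a b hab
    exact mul_lt_mul_of_pos_right hab hL
  · intro N
    refine ⟨|N| + 1, ?_⟩
    have h1 : N ≤ |N| := le_abs_self N
    have h2 : (0 : ℤ) ≤ |N| := abs_nonneg N
    have h3 : (|N| + 1) * 1 ≤ (|N| + 1) * 2 ^ n :=
      mul_le_mul_of_nonneg_left hL1 (by linarith)
    simp only []
    linarith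
  · intro N
    refine ⟨-(|N| + 1), ?_⟩
    have h1 : -|N| ≤ N := neg_abs_le N
    have h2 : (0 : ℤ) ≤ |N| := abs_nonneg N
    have h3 : (|N| + 1) * 1 ≤ (|N| + 1) * 2 ^ n :=
      mul_le_mul_of_nonneg_left hL1 (by linarith)
    simp only []
    linarith
  · intro k
    refine ⟨wd n (c k), wd_mem n (c k), ?_, ?_⟩
    · rw [wd_length]
      push_cast
      ring
    · intro i h
      have hi : i < 2 ^ n := by rwa [wd_length] at h
      rw [wd_get n (c k) i h]
      exact pt_block n c k i hi

lemma exists_freeConcat_agree {W : Set (List Bool)} {x : Bin}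
    (hx : x ∈ codedSystem W) (m : ℕ) :
    ∃ y, IsFreeConcat W y ∧ ∀ i : ℕ, i < m → y (i : ℤ) = x (i : ℤ) := by
  have hU : IsOpen {y : Bin | ∀ i : ℕ, i < m → y (i : ℤ) = x (i : ℤ)} := by
    have he : {y : Bin | ∀ i : ℕ, i < m → y (i : ℤ) = x (i : ℤ)} =
        ⋂ i ∈ Finset.range m, {y : Bin | y (i : ℤ) = x (i : ℤ)} := by
      ext y; simp
    rw [he]
    refine isOpen_biInter_finset fun i _ => ?_
    have hc : Continuous fun y : Bin => y ((i : ℕ) : ℤ) := continuous_apply _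
    exact hc.isOpen_preimage ({x ((i : ℕ) : ℤ)} : Set Bool) (isOpen_discrete _)
  obtain ⟨y, hy1, hy2⟩ := mem_closure_iff.mp hx _ hU (fun i _ => rfl)
  exact ⟨y, hy2, hy1⟩

lemma extract {n : ℕ} {x : Bin} (hx : IsFreeConcat (genWords n) x) :
    ∃ r : ℕ, r < 2 ^ n ∧ ∃ c : ℕ → Bool,
      ∀ i : ℕ, x (i : ℤ) =
        (c ((i + r) / 2 ^ n) != decide ((i + r) % 2 ^ n = 2 ^ n - 1)) := by
  obtain ⟨t, hmono, hup, hdown, hblk⟩ := hx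
  choose w hw hlen hval using hblk
  have hlen2 : ∀ k, (w k).length = 2 ^ n := fun k => (genWords_spec (hw k)).1
  choose b hb using fun k => (genWords_spec (hw k)).2
  have hstep : ∀ k, t (k + 1) = t k + 2 ^ n := by
    intro k
    rw [hlen k, hlen2 k]
    push_cast
    ring
  have hscale : ∀ (k : ℤ) (j : ℕ), t (k + (j : ℤ)) = t k + (j : ℤ) * 2 ^ n := by
    intro k j
    induction j with
    | zero => simp
    | succ j ih =>
        have h1 : (k + ((j : ℤ) + 1)) = (k + (j : ℤ)) + 1 := by ring
        push_cast
        rw [h1, hstep, ih]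
        ring
  obtain ⟨k₁, hk₁⟩ := hup 0
  obtain ⟨k₂, hk₂⟩ := hdown 1
  obtain ⟨k₀, hk₀, hmax⟩ := Int.exists_greatest_of_bdd
    (⟨k₁, fun z hz => by
      by_contra hzk
      push_neg at hzk
      have := hmono hzk
      omega⟩ : ∃ bnd, ∀ z, t z ≤ 0 → z ≤ bnd)
    ⟨k₂, by omega⟩
  have hpos : 0 < t (k₀ + 1) := by
    by_contra h
    push_neg at h
    have := hmax _ h
    omega
  have hstep0 := hstep k₀
  set r : ℕ := (-t k₀).toNat with hrdef
  have hrt : (r : ℤ) = -t k₀ := Int.toNat_of_nonneg (by omega)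
  have hrlt : (r : ℤ) < 2 ^ n := by linarith
  have hr : r < 2 ^ n := by exact_mod_cast hrlt
  refine ⟨r, hr, fun j => b (k₀ + (j : ℤ)), fun i => ?_⟩
  have hL : 0 < 2 ^ n := Nat.one_le_two_pow
  set q := (i + r) / 2 ^ n with hq
  set j := (i + r) % 2 ^ n with hjdef
  have hj : j < 2 ^ n := Nat.mod_lt _ hL
  have hqj : 2 ^ n * q + j = i + r := Nat.div_add_mod (i + r) (2 ^ n)
  have hjw : j < (w (k₀ + (q : ℤ))).length := by rw [hlen2]; exact hj
  have hqjZ : (2 : ℤ) ^ n * (q : ℤ) + (j : ℤ) = (i : ℤ) + (r : ℤ) := by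
    exact_mod_cast hqj
  have harg : (i : ℤ) = t (k₀ + (q : ℤ)) + (j : ℤ) := by
    rw [hscale]
    linarith
  calc x (i : ℤ) = x (t (k₀ + (q : ℤ)) + (j : ℤ)) := by rw [← harg]
    _ = (w (k₀ + (q : ℤ))).get ⟨j, hjw⟩ := hval _ j hjw
    _ = (b (k₀ + (q : ℤ)) != decide (j = 2 ^ n - 1)) := hb _ j hjw

lemma card_lower (n m : ℕ) :
    2 ^ (m / 2 ^ n) ≤ Nat.card (langWord (Xsub n) m) := by
  classical
  have hL : 0 < 2 ^ n := Nat.one_le_two_pow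
  set K := m / 2 ^ n with hK
  set ext : (Fin K → Bool) → ℤ → Bool := fun c k =>
    if h : 0 ≤ k ∧ k < (K : ℤ) then c ⟨k.toNat, by omega⟩ else false with hext
  have hmem : ∀ c, (fun i : Fin m => pt n (ext c) ((i : ℕ) : ℤ)) ∈ langWord (Xsub n) m :=
    fun c => ⟨pt n (ext c), pt_mem n _, fun _ => rfl⟩
  set F : (Fin K → Bool) → langWord (Xsub n) m := fun c => ⟨_, hmem c⟩ with hF
  have hinj : Function.Injective F := by
    intro c c' hcc
    funext j
    have h1 : 1 ≤ 2 ^ n := Nat.one_le_two_pow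
    have hjK : (j : ℕ) < K := j.2
    have hjm : (j : ℕ) * 2 ^ n + (2 ^ n - 1) < m :=
      calc (j : ℕ) * 2 ^ n + (2 ^ n - 1) < (j : ℕ) * 2 ^ n + 2 ^ n :=
            Nat.add_lt_add_left (Nat.sub_lt hL one_pos) _
        _ = ((j : ℕ) + 1) * 2 ^ n := by ring
        _ ≤ K * 2 ^ n := Nat.mul_le_mul_right _ hjK
        _ ≤ m := by rw [hK]; exact Nat.div_mul_le_self m (2 ^ n)
    have hFj := congrFun (congrArg Subtype.val hcc) ⟨(j : ℕ) * 2 ^ n + (2 ^ n - 1), hjm⟩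
    simp only [hF] at hFj
    have hcast : ((((j : ℕ) * 2 ^ n + (2 ^ n - 1) : ℕ)) : ℤ)
        = ((j : ℕ) : ℤ) * 2 ^ n + ((2 ^ n - 1 : ℕ) : ℤ) := by
      push_cast [Nat.cast_sub h1]
      ring
    have hsub : 2 ^ n - 1 < 2 ^ n := Nat.sub_lt hL one_pos
    rw [hcast, pt_block n _ _ _ hsub, pt_block n _ _ _ hsub] at hFj
    simp only [decide_true, Bool.bne_true, Bool.not_inj_iff] at hFj
    have hcond : 0 ≤ (((j : ℕ) : ℤ)) ∧ (((j : ℕ) : ℤ)) < (K : ℤ) :=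
      ⟨Int.natCast_nonneg _, by exact_mod_cast hjK⟩
    simp only [hext, dif_pos hcond, Int.toNat_natCast] at hFj
    convert hFj using 2 <;> exact (Fin.ext rfl).symm
  calc 2 ^ K = Nat.card (Fin K → Bool) := by
        simp [Nat.card_eq_fintype_card]
    _ ≤ Nat.card (langWord (Xsub n) m) := Nat.card_le_card_of_injective F hinj

lemma card_upper (n m : ℕ) :
    Nat.card (langWord (Xsub n) m) ≤ 2 ^ n * 2 ^ (m / 2 ^ n + 2) := by
  classical
  have hL : 0 < 2 ^ n := Nat.one_le_two_pow
  set B := m / 2 ^ n + 2 with hB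
  set recon : Fin (2 ^ n) × (Fin B → Bool) → (Fin m → Bool) := fun p i =>
    if h : ((i : ℕ) + (p.1 : ℕ)) / 2 ^ n < B then
      (p.2 ⟨_, h⟩ != decide (((i : ℕ) + (p.1 : ℕ)) % 2 ^ n = 2 ^ n - 1)) else false
    with hrecon
  have hsub : ∀ v : langWord (Xsub n) m, ∃ p, recon p = (v : Fin m → Bool) := by
    rintro ⟨v, x, hx, hxv⟩
    obtain ⟨y, hy, hyx⟩ := exists_freeConcat_agree hx m
    obtain ⟨r, hr, c, hc⟩ := extract hy
    refine ⟨(⟨r, hr⟩, fun b => c b), ?_⟩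
    funext i
    have hlt : ((i : ℕ) + r) / 2 ^ n < B := by
      have h1 : (i : ℕ) + r ≤ m + 2 ^ n := by
        have := i.2
        omega
      have h2 := Nat.div_le_div_right (c := 2 ^ n) h1
      rw [Nat.add_div_right _ hL] at h2
      omega
    simp only [hrecon, dif_pos hlt]
    rw [← hxv i, ← hyx i i.2, hc i]
  choose G hG using hsub
  have hGinj : Function.Injective G := by
    intro v v' h
    apply Subtype.ext
    rw [← hG v, ← hG v', h]
  calc Nat.card (langWord (Xsub n) m)
      ≤ Nat.card (Fin (2 ^ n) × (Fin B → Bool)) := Nat.card_le_card_of_injective G hGinj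
    _ = 2 ^ n * 2 ^ B := by simp [Nat.card_eq_fintype_card]

/-- `h_top(X_n) = 2^{-n}`. -/

theorem Xsub_entropy (n : ℕ) :
    Tendsto (fun m : ℕ => Real.logb 2 (Nat.card (langWord (Xsub n) m)) / m)
      atTop (𝓝 ((1 / 2 : ℝ) ^ n)) := by
  have hLpos : 0 < 2 ^ n := Nat.one_le_two_pow
  have hLr : (0 : ℝ) < (2 : ℝ) ^ n := by positivity
  have htarget : ((1 / 2 : ℝ)) ^ n = 1 / (2 : ℝ) ^ n := by
    rw [div_pow, one_pow]
  -- positivity of the cardinalities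
  have hlow : ∀ m : ℕ, (2 : ℝ) ^ (m / 2 ^ n) ≤ (Nat.card (langWord (Xsub n) m) : ℝ) := by
    intro m
    exact_mod_cast card_lower n m
  have hhigh : ∀ m : ℕ,
      (Nat.card (langWord (Xsub n) m) : ℝ) ≤ (2 : ℝ) ^ (n + (m / 2 ^ n + 2)) := by
    intro m
    rw [pow_add]
    exact_mod_cast card_upper n m
  have hpos : ∀ m : ℕ, (0 : ℝ) < (Nat.card (langWord (Xsub n) m) : ℝ) :=
    fun m => lt_of_lt_of_le (by positivity) (hlow m)
  -- logarithmic bounds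
  have hlb : ∀ m : ℕ, ((m / 2 ^ n : ℕ) : ℝ) ≤ Real.logb 2 (Nat.card (langWord (Xsub n) m)) := by
    intro m
    have h := (Real.logb_le_logb (one_lt_two : (1 : ℝ) < 2) (by positivity) (hpos m)).mpr (hlow m)
    rwa [Real.logb_pow, Real.logb_self_eq_one (one_lt_two : (1 : ℝ) < 2), mul_one] at h
  have hub : ∀ m : ℕ, Real.logb 2 (Nat.card (langWord (Xsub n) m))
      ≤ (n : ℝ) + ((m / 2 ^ n : ℕ) : ℝ) + 2 := by
    intro m
    have h := (Real.logb_le_logb (one_lt_two : (1 : ℝ) < 2) (hpos m) (by positivity)).mpr (hhigh m)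
    rw [Real.logb_pow, Real.logb_self_eq_one (one_lt_two : (1 : ℝ) < 2), mul_one] at h
    push_cast at h
    linarith
  -- squeeze
  have hg : Tendsto (fun m : ℕ => 1 / (2 : ℝ) ^ n - 1 / m) atTop (𝓝 ((1 / 2 : ℝ) ^ n)) := by
    rw [htarget]
    have h := (tendsto_const_nhds (x := 1 / (2 : ℝ) ^ n) (f := atTop (α := ℕ))).sub
      tendsto_one_div_atTop_nhds_zero_nat
    simpa using h
  have hh : Tendsto (fun m : ℕ => ((n : ℝ) + 2) * (1 / m) + 1 / (2 : ℝ) ^ n)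
      atTop (𝓝 ((1 / 2 : ℝ) ^ n)) := by
    rw [htarget]
    have h := (tendsto_one_div_atTop_nhds_zero_nat.const_mul ((n : ℝ) + 2)).add
      (tendsto_const_nhds (x := 1 / (2 : ℝ) ^ n) (f := atTop (α := ℕ)))
    simpa using h
  refine tendsto_of_tendsto_of_tendsto_of_le_of_le' hg hh ?_ ?_
  · filter_upwards [eventually_ge_atTop 1] with m hm
    have hm0 : (0 : ℝ) < (m : ℝ) := by exact_mod_cast hm
    have hdiv : (m : ℝ) / (2 : ℝ) ^ n - 1 ≤ ((m / 2 ^ n : ℕ) : ℝ) := by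
      have h1 : m < (m / 2 ^ n + 1) * 2 ^ n := by
        have h2 := Nat.div_add_mod m (2 ^ n)
        have h3 := Nat.mod_lt m hLpos
        calc m = 2 ^ n * (m / 2 ^ n) + m % 2 ^ n := h2.symm
          _ < 2 ^ n * (m / 2 ^ n) + 2 ^ n := Nat.add_lt_add_left h3 _
          _ = (m / 2 ^ n + 1) * 2 ^ n := by ring
      have h4 : (m : ℝ) < (((m / 2 ^ n : ℕ) : ℝ) + 1) * (2 : ℝ) ^ n := by
        exact_mod_cast h1
      rw [div_sub' (ne_of_gt hLr)]
      rw [div_le_iff₀ hLr]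
      nlinarith
    calc 1 / (2 : ℝ) ^ n - 1 / m = ((m : ℝ) / (2 : ℝ) ^ n - 1) / m := by
          field_simp
      _ ≤ ((m / 2 ^ n : ℕ) : ℝ) / m := (div_le_div_iff_of_pos_right hm0).mpr hdiv
      _ ≤ Real.logb 2 (Nat.card (langWord (Xsub n) m)) / m :=
          (div_le_div_iff_of_pos_right hm0).mpr (hlb m)
  · filter_upwards [eventually_ge_atTop 1] with m hm
    have hm0 : (0 : ℝ) < (m : ℝ) := by exact_mod_cast hm
    have hdiv : ((m / 2 ^ n : ℕ) : ℝ) ≤ (m : ℝ) / (2 : ℝ) ^ n := by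
      rw [le_div_iff₀ hLr]
      have h1 : m / 2 ^ n * 2 ^ n ≤ m := Nat.div_mul_le_self m (2 ^ n)
      exact_mod_cast h1
    calc Real.logb 2 (Nat.card (langWord (Xsub n) m)) / m
        ≤ ((n : ℝ) + ((m / 2 ^ n : ℕ) : ℝ) + 2) / m := (div_le_div_iff_of_pos_right hm0).mpr (hub m)
      _ ≤ ((n : ℝ) + (m : ℝ) / (2 : ℝ) ^ n + 2) / m := by
          apply (div_le_div_iff_of_pos_right hm0).mpr
          linarith
      _ = ((n : ℝ) + 2) * (1 / m) + 1 / (2 : ℝ) ^ n := by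
          field_simp
          ring

end PhaseTransitions
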